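/- For vectors v, w in F^n, the inequality |v·u| ≤ |w·u| holds for all u ∈ F^n if and only if v = λw for some scalar λ with |λ| ≤ 1. -/

import Mathlib

/-- For vectors `v, w ∈ 𝔽ⁿ`, the inequality `|v·u| ≤ |w·u|` holds for all
`u ∈ 𝔽ⁿ` if and only if `v = λ • w` for some scalar `λ` with `|λ| ≤ 1`. -/
theorem stmt1 {𝕜 : Type*} [RCLike 𝕜] {n : ℕ} (v w : EuclideanSpace 𝕜 (Fin n)) :
    (∀ u : EuclideanSpace 𝕜 (Fin n), ‖(inner 𝕜 v u : 𝕜)‖ ≤ ‖(inner 𝕜 w u : 𝕜)‖) ↔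
      ∃ c : 𝕜, ‖c‖ ≤ 1 ∧ v = c • w := by
  constructor
  · intro h
    -- v is in the double orthogonal complement of span {w}, which is span {w}
    have hv : v ∈ (Submodule.span 𝕜 {w})ᗮᗮ := by
      rw [Submodule.mem_orthogonal]
      intro u hu
      have hwu : (inner 𝕜 w u : 𝕜) = 0 := by
        exact (Submodule.mem_orthogonal _ u).mp hu w (Submodule.mem_span_singleton_self w)
      have : (inner 𝕜 v u : 𝕜) = 0 := by
        have := h u
        rw [hwu, norm_zero] at this
        exact norm_le_zero_iff.mp this
      rw [← inner_conj_symm, this, map_zero]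
    rw [Submodule.orthogonal_orthogonal, Submodule.mem_span_singleton] at hv
    obtain ⟨c, hc⟩ := hv
    rcases eq_or_ne w 0 with hw | hw
    · exact ⟨0, by simp, by rw [← hc, hw]; simp⟩
    · refine ⟨c, ?_, hc.symm⟩
      have hww : (0:ℝ) < ‖w‖^2 := by have := norm_pos_iff.mpr hw; positivity
      have := h w
      rw [← hc, inner_smul_left, norm_mul, RCLike.norm_conj,
        @inner_self_eq_norm_sq_to_K 𝕜] at this
      have h2 : ‖c‖ * ‖w‖^2 ≤ ‖w‖^2 := by
        simpa [norm_pow, RCLike.norm_ofReal, abs_norm] using this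
      nlinarith
  · rintro ⟨c, hc, rfl⟩ u
    rw [inner_smul_left, norm_mul, RCLike.norm_conj]
    exact mul_le_of_le_one_left (norm_nonneg _) hc
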